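/- (Multidimensional bound for the parameter-estimation indicator.) Let P(·|γ) be a family of probability distributions on 𝒳 indexed by γ in an open subset of ℝ^d, differentiable in each coordinate γ_i, and let γ̂: 𝒳 → ℝ^d be an estimator. Define γ̂_i(γ) = Σ_{x∈𝒳} P(x|γ) γ̂_i(x) and σ_i(γ) = √(Σ_{x∈𝒳} P(x|γ) γ̂_i(x)² − γ̂_i(γ)²), and assume σ_i(γ) > 0 for every i. Then the indicator I₃(γ) = √(Σ_{i=1}^d ((∂γ̂_i(γ)/∂γ_i) / σ_i(γ))²) satisfies I₃(γ) ≤ √(tr F(γ)). -/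

import Mathlib

open Finset Real

theorem auxCR {X : Type*} [Fintype X] (p pd g : X → ℝ)
    (hp : ∀ x, 0 < p x) (hp1 : ∑ x, p x = 1) (h0 : ∑ x, pd x = 0)
    (hv : 0 < (∑ x, p x * g x ^ 2) - (∑ x, p x * g x) ^ 2) :
    ((∑ x, pd x * g x) / Real.sqrt ((∑ x, p x * g x ^ 2) - (∑ x, p x * g x) ^ 2)) ^ 2
      ≤ ∑ x, pd x ^ 2 / p x := by
  set m : ℝ := ∑ x, p x * g x with hm
  set v : ℝ := (∑ x, p x * g x ^ 2) - m ^ 2 with hvdef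
  have hvar : ∑ x, p x * (g x - m) ^ 2 = v := by
    have : ∀ x, p x * (g x - m) ^ 2
        = p x * g x ^ 2 - 2 * m * (p x * g x) + m ^ 2 * p x := fun x => by ring
    rw [Finset.sum_congr rfl fun x _ => this x]
    rw [Finset.sum_add_distrib, Finset.sum_sub_distrib, ← Finset.mul_sum, ← Finset.mul_sum,
      hp1, ← hm]
    ring
  have hcen : ∑ x, pd x * (g x - m) = ∑ x, pd x * g x := by
    have : ∀ x, pd x * (g x - m) = pd x * g x - m * pd x := fun x => by ring
    rw [Finset.sum_congr rfl fun x _ => this x, Finset.sum_sub_distrib, ← Finset.mul_sum, h0]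
    ring
  have key : (∑ x, pd x * g x) ^ 2 ≤ (∑ x, pd x ^ 2 / p x) * v := by
    rw [← hcen, ← hvar]
    have := Finset.sum_mul_sq_le_sq_mul_sq Finset.univ
      (fun x => pd x / Real.sqrt (p x))
      (fun x => Real.sqrt (p x) * (g x - m))
    have e1 : ∀ x : X, pd x / Real.sqrt (p x) * (Real.sqrt (p x) * (g x - m))
        = pd x * (g x - m) := by
      intro x
      have : Real.sqrt (p x) ≠ 0 := ne_of_gt (Real.sqrt_pos.mpr (hp x))
      field_simp
    have e2 : ∀ x : X, (pd x / Real.sqrt (p x)) ^ 2 = pd x ^ 2 / p x := by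
      intro x
      rw [div_pow, Real.sq_sqrt (hp x).le]
    have e3 : ∀ x : X, (Real.sqrt (p x) * (g x - m)) ^ 2 = p x * (g x - m) ^ 2 := by
      intro x
      rw [mul_pow, Real.sq_sqrt (hp x).le]
    rw [Finset.sum_congr rfl fun x _ => e1 x, Finset.sum_congr rfl fun x _ => e2 x,
      Finset.sum_congr rfl fun x _ => e3 x] at this
    exact this
  rw [div_pow, Real.sq_sqrt hv.le, div_le_iff₀ hv]
  exact key

/-- multidimensional bound for the parameter-estimation indicator. -/
theorem stmt13 {X : Type*} [Fintype X] [Nonempty X] {d : ℕ}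
    (U : Set (Fin d → ℝ)) (hU : IsOpen U)
    (P : (Fin d → ℝ) → X → ℝ)
    (hpos : ∀ γ ∈ U, ∀ x : X, 0 < P γ x)
    (hsum : ∀ γ ∈ U, ∑ x : X, P γ x = 1)
    (hdiff : ∀ x : X, ∀ i : Fin d, ∀ γ ∈ U,
      DifferentiableAt ℝ (fun t : ℝ => P (Function.update γ i t) x) (γ i))
    (ghat : X → Fin d → ℝ)
    (γ : Fin d → ℝ) (hγ : γ ∈ U)
    (hσ : ∀ i : Fin d,
      0 < Real.sqrt ((∑ x : X, P γ x * (ghat x i) ^ 2) - (∑ x : X, P γ x * ghat x i) ^ 2)) :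
    Real.sqrt (∑ i : Fin d,
        (deriv (fun s : ℝ => ∑ x : X, P (Function.update γ i s) x * ghat x i) (γ i) /
          Real.sqrt ((∑ x : X, P γ x * (ghat x i) ^ 2) - (∑ x : X, P γ x * ghat x i) ^ 2)) ^ 2)
      ≤ Real.sqrt (∑ i : Fin d, ∑ x : X,
          (deriv (fun s : ℝ => P (Function.update γ i s) x) (γ i)) ^ 2 / P γ x) := by
  apply Real.sqrt_le_sqrt
  apply Finset.sum_le_sum
  intro i _
  have hD : ∀ x : X, HasDerivAt (fun s : ℝ => P (Function.update γ i s) x)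
      (deriv (fun s : ℝ => P (Function.update γ i s) x) (γ i)) (γ i) :=
    fun x => (hdiff x i γ hγ).hasDerivAt
  -- derivative of the mean is the sum of derivatives
  have hderivm : deriv (fun s : ℝ => ∑ x : X, P (Function.update γ i s) x * ghat x i) (γ i)
      = ∑ x : X, deriv (fun s : ℝ => P (Function.update γ i s) x) (γ i) * ghat x i := by
    exact (HasDerivAt.fun_sum fun x _ => (hD x).mul_const _).deriv
  -- sum of derivatives is zero
  have hsum0 : ∑ x : X, deriv (fun s : ℝ => P (Function.update γ i s) x) (γ i) = 0 := by
    have hcont : Continuous fun s : ℝ => Function.update γ i s :=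
      continuous_const.update i continuous_id
    have hmem : γ i ∈ (fun s : ℝ => Function.update γ i s) ⁻¹' U := by
      simp only [Set.mem_preimage, Function.update_eq_self]
      exact hγ
    have hEq : (fun s : ℝ => ∑ x : X, P (Function.update γ i s) x)
        =ᶠ[nhds (γ i)] fun _ => (1 : ℝ) := by
      filter_upwards [(hU.preimage hcont).mem_nhds hmem] with s hs
      exact hsum _ hs
    have h1 : HasDerivAt (fun s : ℝ => ∑ x : X, P (Function.update γ i s) x)
        (∑ x : X, deriv (fun s : ℝ => P (Function.update γ i s) x) (γ i)) (γ i) :=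
      HasDerivAt.fun_sum fun x _ => hD x
    have h2 := hEq.deriv_eq
    rw [h1.deriv] at h2
    simpa using h2
  rw [hderivm]
  have hγ' : Function.update γ i (γ i) = γ := Function.update_eq_self i γ
  exact auxCR (fun x => P γ x) (fun x => deriv (fun s : ℝ => P (Function.update γ i s) x) (γ i))
    (fun x => ghat x i) (hpos γ hγ) (hsum γ hγ) hsum0 (Real.sqrt_pos.mp (hσ i))
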